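/- arXiv:1109.4472 — 4 statements merged into one kernel-verified Lean document; each statement's English description precedes it below -/
import Mathlib

section
/- (Bollobás–Erdős rhombus theorem.) Let k ≥ 1 be an integer and let 0 < γ < 1/4. Then there do not exist points p₁, p₂, q₁, q₂ on the unit sphere S^k ⊆ ℝ^{k+1} such that ‖p₁ − p₂‖ ≥ 2 − γ, ‖q₁ − q₂‖ ≥ 2 − γ, and ‖p_i − q_j‖ ≤ √2 − γ for all 1 ≤ i, j ≤ 2. -/
lemma be_rhombus_key (γ s A B S : ℝ) (hγ0 : 0 < γ) (hγ : γ < 1 / 4)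
    (hs : s ^ 2 = 2) (hs0 : 0 ≤ s)
    (hA0 : 0 ≤ A) (hB0 : 0 ≤ B)
    (hA : A ^ 2 ≤ 4 * γ - γ ^ 2) (hB : B ^ 2 ≤ 4 * γ - γ ^ 2)
    (hS : 4 * s * γ - 2 * γ ^ 2 ≤ S) (hSAB : S ≤ A * B) : False := by
  have hs14 : (1.4 : ℝ) ≤ s := by nlinarith
  have hAB : A * B ≤ 4 * γ - γ ^ 2 := by nlinarith [sq_nonneg (A - B)]
  -- 4*s*γ - 2*γ^2 ≤ 4*γ - γ^2  ⇒  γ*(4*s - γ - 4) ≤ 0, contradiction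
  nlinarith

/-- **Bollobás–Erdős rhombus theorem.** For `0 < γ < 1/4` there do not exist
points `p₁, p₂, q₁, q₂` on the unit sphere `S^k ⊆ ℝ^{k+1}` with
`‖p₁ - p₂‖ ≥ 2 - γ`, `‖q₁ - q₂‖ ≥ 2 - γ`, and `‖p_i - q_j‖ ≤ √2 - γ`
for all `i, j ∈ {1, 2}`. -/
theorem bollobas_erdos_rhombus
    (k : ℕ) (hk : 1 ≤ k) (γ : ℝ) (hγ0 : 0 < γ) (hγ : γ < 1 / 4)
    (p₁ p₂ q₁ q₂ : EuclideanSpace ℝ (Fin (k + 1)))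
    (hp₁ : ‖p₁‖ = 1) (hp₂ : ‖p₂‖ = 1) (hq₁ : ‖q₁‖ = 1) (hq₂ : ‖q₂‖ = 1)
    (hpp : 2 - γ ≤ ‖p₁ - p₂‖) (hqq : 2 - γ ≤ ‖q₁ - q₂‖)
    (h11 : ‖p₁ - q₁‖ ≤ Real.sqrt 2 - γ) (h12 : ‖p₁ - q₂‖ ≤ Real.sqrt 2 - γ)
    (h21 : ‖p₂ - q₁‖ ≤ Real.sqrt 2 - γ) (h22 : ‖p₂ - q₂‖ ≤ Real.sqrt 2 - γ) :
    False := by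
  set s := Real.sqrt 2 with hsdef
  have hs2 : s ^ 2 = 2 := Real.sq_sqrt (by norm_num)
  have hs0 : 0 ≤ s := Real.sqrt_nonneg 2
  -- squared versions of the hypotheses
  have sq11 : ‖p₁ - q₁‖ ^ 2 ≤ (s - γ) ^ 2 := pow_le_pow_left₀ (norm_nonneg _) h11 2
  have sq12 : ‖p₁ - q₂‖ ^ 2 ≤ (s - γ) ^ 2 := pow_le_pow_left₀ (norm_nonneg _) h12 2
  have sq21 : ‖p₂ - q₁‖ ^ 2 ≤ (s - γ) ^ 2 := pow_le_pow_left₀ (norm_nonneg _) h21 2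
  have sq22 : ‖p₂ - q₂‖ ^ 2 ≤ (s - γ) ^ 2 := pow_le_pow_left₀ (norm_nonneg _) h22 2
  have sqpp : (2 - γ) ^ 2 ≤ ‖p₁ - p₂‖ ^ 2 := pow_le_pow_left₀ (by linarith) hpp 2
  have sqqq : (2 - γ) ^ 2 ≤ ‖q₁ - q₂‖ ^ 2 := pow_le_pow_left₀ (by linarith) hqq 2
  have hexp : (s - γ) ^ 2 = 2 - 2 * s * γ + γ ^ 2 := by
    have : (s - γ) ^ 2 = s ^ 2 - 2 * s * γ + γ ^ 2 := by ring
    rw [this, hs2]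
  have hexp2 : (2 - γ) ^ 2 = 4 - 4 * γ + γ ^ 2 := by ring
  -- expand norms via inner products
  have epp := @norm_sub_sq_real (EuclideanSpace ℝ (Fin (k + 1))) _ _ p₁ p₂
  have eqq := @norm_sub_sq_real (EuclideanSpace ℝ (Fin (k + 1))) _ _ q₁ q₂
  have e11 := @norm_sub_sq_real (EuclideanSpace ℝ (Fin (k + 1))) _ _ p₁ q₁
  have e12 := @norm_sub_sq_real (EuclideanSpace ℝ (Fin (k + 1))) _ _ p₁ q₂
  have e21 := @norm_sub_sq_real (EuclideanSpace ℝ (Fin (k + 1))) _ _ p₂ q₁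
  have e22 := @norm_sub_sq_real (EuclideanSpace ℝ (Fin (k + 1))) _ _ p₂ q₂
  rw [hp₁, hp₂] at epp
  rw [hq₁, hq₂] at eqq
  rw [hp₁, hq₁] at e11
  rw [hp₁, hq₂] at e12
  rw [hp₂, hq₁] at e21
  rw [hp₂, hq₂] at e22
  simp only [one_pow] at epp eqq e11 e12 e21 e22
  -- Cauchy–Schwarz for u = p₁ + p₂, v = q₁ + q₂
  have cs := real_inner_le_norm (p₁ + p₂) (q₁ + q₂)
  have hu : ‖p₁ + p₂‖ ^ 2 = 2 + 2 * (inner ℝ p₁ p₂ : ℝ) := by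
    have := @norm_add_sq_real (EuclideanSpace ℝ (Fin (k + 1))) _ _ p₁ p₂
    rw [hp₁, hp₂] at this; rw [this]; ring
  have hv : ‖q₁ + q₂‖ ^ 2 = 2 + 2 * (inner ℝ q₁ q₂ : ℝ) := by
    have := @norm_add_sq_real (EuclideanSpace ℝ (Fin (k + 1))) _ _ q₁ q₂
    rw [hq₁, hq₂] at this; rw [this]; ring
  have huv : (inner ℝ (p₁ + p₂) (q₁ + q₂) : ℝ) =
      (inner ℝ p₁ q₁ : ℝ) + (inner ℝ p₁ q₂ : ℝ) + (inner ℝ p₂ q₁ : ℝ) + (inner ℝ p₂ q₂ : ℝ) := by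
    simp only [inner_add_left, inner_add_right]
    ring
  rw [huv] at cs
  refine be_rhombus_key γ s ‖p₁ + p₂‖ ‖q₁ + q₂‖
    ((inner ℝ p₁ q₁ : ℝ) + (inner ℝ p₁ q₂ : ℝ) + (inner ℝ p₂ q₁ : ℝ) + (inner ℝ p₂ q₂ : ℝ))
    hγ0 hγ hs2 hs0 (norm_nonneg _) (norm_nonneg _) ?_ ?_ ?_ cs
  · rw [hu]; linarith
  · rw [hv]; linarith
  · linarith
end

section
/- Let k ≥ 2 and h be integers with 1 ≤ h ≤ ⌊k/2⌋, and let a be a real number with 0 < a < 1/(16h⁴). Let x₁, …, x_k be points on the unit sphere S^k ⊆ ℝ^{k+1} such that ‖x_i − x_{i+1}‖ ≥ 2 − a for every 1 ≤ i ≤ k − 1. Then ‖x₁ − x_{2h}‖ > 2 − 4h²a. -/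
/-- **Lemma (near-antipodal chains on the sphere).** Let `k ≥ 2`,
`1 ≤ h ≤ ⌊k/2⌋`, and `0 < a < 1/(16h⁴)`. If `x₁, …, x_k` are points on the
unit sphere `S^k ⊆ ℝ^{k+1}` with `‖x_i - x_{i+1}‖ ≥ 2 - a` for every
`1 ≤ i ≤ k - 1`, then `‖x₁ - x_{2h}‖ > 2 - 4h²a`. -/
theorem antipodal_chain
    (k h : ℕ) (hk : 2 ≤ k) (hh1 : 1 ≤ h) (hh2 : h ≤ k / 2)
    (a : ℝ) (ha0 : 0 < a) (ha : a < 1 / (16 * (h : ℝ) ^ 4))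
    (x : ℕ → EuclideanSpace ℝ (Fin (k + 1)))
    (hsphere : ∀ i : ℕ, 1 ≤ i → i ≤ k → ‖x i‖ = 1)
    (hchain : ∀ i : ℕ, 1 ≤ i → i < k → 2 - a ≤ ‖x i - x (i + 1)‖) :
    2 - 4 * (h : ℝ) ^ 2 * a < ‖x 1 - x (2 * h)‖ := by
  set s := Real.sqrt a with hs
  have hs0 : 0 ≤ s := Real.sqrt_nonneg a
  have hs2 : s ^ 2 = a := Real.sq_sqrt ha0.le
  have hH : (1 : ℝ) ≤ (h : ℝ) := by exact_mod_cast hh1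
  have h2hk : 2 * h ≤ k := by
    calc 2 * h ≤ 2 * (k / 2) := by omega
    _ ≤ k := Nat.mul_div_le k 2
  have ha16 : a * (16 * (h : ℝ) ^ 4) < 1 := by
    have hpos : (0 : ℝ) < 16 * (h : ℝ) ^ 4 := by positivity
    exact (lt_div_iff₀ hpos).mp ha
  have ha2 : a < 1 := by
    have hh2' : (1 : ℝ) ≤ (h : ℝ) ^ 2 := by nlinarith
    have h16 : (16 : ℝ) ≤ 16 * (h : ℝ) ^ 4 := by nlinarith
    nlinarith [mul_le_mul_of_nonneg_left h16 ha0.le]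
  -- key pair bound
  have hpair : ∀ i : ℕ, 1 ≤ i → i < k → ‖x i + x (i + 1)‖ ≤ 2 * s := by
    intro i hi1 hik
    have hni : ‖x i‖ = 1 := hsphere i hi1 hik.le
    have hni1 : ‖x (i + 1)‖ = 1 := hsphere (i + 1) (by omega) (by omega)
    have hpar := parallelogram_law_with_norm ℝ (x i) (x (i + 1))
    rw [hni, hni1] at hpar
    have hc := hchain i hi1 hik
    have hsq : ‖x i + x (i + 1)‖ ^ 2 ≤ (2 * s) ^ 2 := by
      have h2s : (2 * s) ^ 2 = 4 * a := by rw [mul_pow, hs2]; ring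
      nlinarith [norm_nonneg (x i - x (i + 1))]
    nlinarith [norm_nonneg (x i + x (i + 1))]
  -- telescoping bound
  have htel : ∀ j : ℕ, j + 1 ≤ 2 * h →
      ‖x 1 + ((-1 : ℝ) ^ (j + 1)) • x (j + 1)‖ ≤ (j : ℝ) * (2 * s) := by
    intro j
    induction j with
    | zero =>
      intro _
      simp
    | succ n ih =>
      intro hle
      have hstep : x 1 + ((-1 : ℝ) ^ (n + 2)) • x (n + 2) =
          (x 1 + ((-1 : ℝ) ^ (n + 1)) • x (n + 1)) +
          ((-1 : ℝ) ^ (n + 2)) • (x (n + 1) + x (n + 2)) := by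
        rw [smul_add]
        rw [pow_succ ((-1 : ℝ)) (n + 1)]
        module
      have hn1k : n + 1 < k := by omega
      have hp := hpair (n + 1) (by omega) hn1k
      calc ‖x 1 + ((-1 : ℝ) ^ (n + 1 + 1)) • x (n + 1 + 1)‖
          ≤ ‖x 1 + ((-1 : ℝ) ^ (n + 1)) • x (n + 1)‖ +
            ‖((-1 : ℝ) ^ (n + 2)) • (x (n + 1) + x (n + 2))‖ := by
            rw [show (n + 1 + 1) = n + 2 from rfl, hstep]; exact norm_add_le _ _
        _ ≤ (n : ℝ) * (2 * s) + 2 * s := by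
            have := ih (by omega)
            have hnorm : ‖((-1 : ℝ) ^ (n + 2)) • (x (n + 1) + x (n + 2))‖ =
                ‖x (n + 1) + x (n + 2)‖ := by
              rw [norm_smul]; simp
            rw [hnorm]; linarith
        _ = ((n + 1 : ℕ) : ℝ) * (2 * s) := by push_cast; ring
  -- apply at 2h
  have h2h1 : 2 * h = (2 * h - 1) + 1 := by omega
  have hsum : ‖x 1 + x (2 * h)‖ ≤ (2 * (h : ℝ) - 1) * (2 * s) := by
    have := htel (2 * h - 1) (by omega)
    rw [← h2h1] at this
    have heven : ((-1 : ℝ) ^ (2 * h)) = 1 := Even.neg_one_pow ⟨h, by ring⟩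
    rw [heven, one_smul] at this
    have hcast : ((2 * h - 1 : ℕ) : ℝ) = 2 * (h : ℝ) - 1 := by
      have h1 : (1 : ℕ) ≤ 2 * h := by omega
      push_cast [h1]
      ring
    rwa [hcast] at this
  -- parallelogram again
  have hn1 : ‖x 1‖ = 1 := hsphere 1 le_rfl (by omega)
  have hn2h : ‖x (2 * h)‖ = 1 := hsphere (2 * h) (by omega) h2hk
  have hpar' : ‖x 1 + x (2 * h)‖ ^ 2 + ‖x 1 - x (2 * h)‖ ^ 2 = 4 := by
    have := parallelogram_law_with_norm ℝ (x 1) (x (2 * h))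
    rw [hn1, hn2h] at this
    simp only [pow_two]
    linarith
  have hsumnn : (0 : ℝ) ≤ (2 * (h : ℝ) - 1) * (2 * s) := by
    have : (0 : ℝ) ≤ 2 * (h : ℝ) - 1 := by linarith
    positivity
  have hsumsq : ‖x 1 + x (2 * h)‖ ^ 2 ≤ (2 * (h : ℝ) - 1) ^ 2 * (4 * a) := by
    have h1 := pow_le_pow_left₀ (norm_nonneg _) hsum 2
    have h2 : ((2 * (h : ℝ) - 1) * (2 * s)) ^ 2 = (2 * (h : ℝ) - 1) ^ 2 * (4 * a) := by
      rw [mul_pow, mul_pow, hs2]; ring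
    linarith [h2 ▸ h1]
  have hdiffsq : 4 - (2 * (h : ℝ) - 1) ^ 2 * (4 * a) ≤ ‖x 1 - x (2 * h)‖ ^ 2 := by
    linarith
  have hkey : (2 - 4 * (h : ℝ) ^ 2 * a) ^ 2 < ‖x 1 - x (2 * h)‖ ^ 2 := by
    nlinarith [ha0, hH, ha16, hdiffsq]
  exact lt_of_pow_lt_pow_left₀ 2 (norm_nonneg _) hkey
end

section
/- Let d ≥ 2 and r ≥ 2 be integers and let θ be a real number with 0 < θ < 1/r². Let p₁, …, p_r be points on the unit sphere S^d ⊆ ℝ^{d+1} such that ‖p_i − p_{i+1}‖ ≥ 2 − θ/r² for every 1 ≤ i ≤ r − 1. Then for all 1 ≤ i < j ≤ r with j − i odd (i.e., i and j of opposite parity), ‖p_i − p_j‖ > 2 − θ. In particular, under these hypotheses all pairs {p_i, p_j} corresponding to edges of the complete bipartite graph between odd-indexed and even-indexed vertices are at distance greater than 2 − θ. -/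
set_option maxHeartbeats 800000


/-- **Lemma (from a near-antipodal path to a near-antipodal complete
bipartite pattern).** Let `d, r ≥ 2` and `0 < θ < 1/r²`. If `p₁, …, p_r` are
points on the unit sphere `S^d ⊆ ℝ^{d+1}` with `‖p_i - p_{i+1}‖ ≥ 2 - θ/r²`
for every `1 ≤ i ≤ r - 1`, then for all `1 ≤ i < j ≤ r` with `j - i` odd we
have `‖p_i - p_j‖ > 2 - θ`. -/
theorem antipodal_path_to_bipartite
    (d r : ℕ) (hd : 2 ≤ d) (hr : 2 ≤ r)
    (θ : ℝ) (hθ0 : 0 < θ) (hθ : θ < 1 / (r : ℝ) ^ 2)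
    (p : ℕ → EuclideanSpace ℝ (Fin (d + 1)))
    (hsphere : ∀ i : ℕ, 1 ≤ i → i ≤ r → ‖p i‖ = 1)
    (hpath : ∀ i : ℕ, 1 ≤ i → i < r → 2 - θ / (r : ℝ) ^ 2 ≤ ‖p i - p (i + 1)‖) :
    ∀ i j : ℕ, 1 ≤ i → i < j → j ≤ r → Odd (j - i) →
      2 - θ < ‖p i - p j‖ := by
  set R : ℝ := (r : ℝ) with hRdef
  have hR : (2 : ℝ) ≤ R := by rw [hRdef]; exact_mod_cast hr
  have hR0 : (0 : ℝ) < R := by linarith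
  set δ : ℝ := θ / R ^ 2 with hδdef
  have hδ0 : 0 < δ := div_pos hθ0 (by positivity)
  have hR2 : (0 : ℝ) < R ^ 2 := by positivity
  have hθR : θ * R ^ 2 < 1 := (lt_div_iff₀ hR2).mp hθ
  have hθ1 : θ < 1 := by nlinarith
  have hδsmall : δ < 1 :=
    lt_of_le_of_lt (div_le_self hθ0.le (by nlinarith : (1:ℝ) ≤ R ^ 2)) hθ1
  set s : ℝ := 2 * Real.sqrt δ with hsdef
  have hs0 : 0 ≤ s := by positivity
  have hssq : s ^ 2 = 4 * δ := by
    rw [hsdef, mul_pow, Real.sq_sqrt hδ0.le]; ring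
  -- step bound
  have hstep : ∀ i : ℕ, 1 ≤ i → i < r → ‖p i + p (i + 1)‖ ≤ s := by
    intro i hi hir
    have ha : ‖p i‖ = 1 := hsphere i hi (by omega)
    have hb : ‖p (i + 1)‖ = 1 := hsphere (i + 1) (by omega) (by omega)
    have hab : 2 - δ ≤ ‖p i - p (i + 1)‖ := hpath i hi hir
    have h1 := norm_add_sq_real (p i) (p (i + 1))
    have h2 := norm_sub_sq_real (p i) (p (i + 1))
    have hsum : ‖p i + p (i + 1)‖ ^ 2 + ‖p i - p (i + 1)‖ ^ 2 = 4 := by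
      rw [h1, h2, ha, hb]; ring
    have hsq : ‖p i + p (i + 1)‖ ^ 2 ≤ s ^ 2 := by
      rw [hssq]
      nlinarith [norm_nonneg (p i - p (i + 1)), hδsmall, hδ0]
    calc ‖p i + p (i + 1)‖ = Real.sqrt (‖p i + p (i + 1)‖ ^ 2) :=
          (Real.sqrt_sq (norm_nonneg _)).symm
      _ ≤ Real.sqrt (s ^ 2) := Real.sqrt_le_sqrt hsq
      _ = s := Real.sqrt_sq hs0
  -- telescoping bound
  have key : ∀ k : ℕ, ∀ i : ℕ, 1 ≤ i → i + k ≤ r →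
      (Odd k → ‖p i + p (i + k)‖ ≤ k * s) ∧
      (Even k → ‖p i - p (i + k)‖ ≤ k * s) := by
    intro k
    induction k with
    | zero =>
      intro i hi hik
      refine ⟨fun h => absurd h (by simp), fun _ => by simp⟩
    | succ n ih =>
      intro i hi hik
      have hstep' := hstep (i + n) (by omega) (by omega)
      obtain ⟨ihodd, iheven⟩ := ih i hi (by omega)
      constructor
      · intro hodd
        have hne : Even n := by
          rcases Nat.even_or_odd n with h | h
          · exact h
          · exact absurd hodd (by simp [Nat.odd_add_one, Nat.not_even_iff_odd, h])
        have h1 := iheven hne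
        have heq : p i + p (i + (n + 1)) =
            (p i - p (i + n)) + (p (i + n) + p (i + n + 1)) := by
          rw [show i + (n + 1) = i + n + 1 from rfl]; abel
        calc ‖p i + p (i + (n + 1))‖
            = ‖(p i - p (i + n)) + (p (i + n) + p (i + n + 1))‖ := by rw [heq]
          _ ≤ ‖p i - p (i + n)‖ + ‖p (i + n) + p (i + n + 1)‖ := norm_add_le _ _
          _ ≤ n * s + s := add_le_add h1 hstep'
          _ = (n + 1 : ℕ) * s := by push_cast; ring
      · intro heven
        have hno : Odd n := by
          rcases Nat.even_or_odd n with h | h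
          · exact absurd heven (by simp [Nat.even_add_one, Nat.not_even_iff_odd, h])
          · exact h
        have h1 := ihodd hno
        have heq : p i - p (i + (n + 1)) =
            (p i + p (i + n)) - (p (i + n) + p (i + n + 1)) := by
          rw [show i + (n + 1) = i + n + 1 from rfl]; abel
        calc ‖p i - p (i + (n + 1))‖
            = ‖(p i + p (i + n)) - (p (i + n) + p (i + n + 1))‖ := by rw [heq]
          _ ≤ ‖p i + p (i + n)‖ + ‖p (i + n) + p (i + n + 1)‖ := norm_sub_le _ _
          _ ≤ n * s + s := add_le_add h1 hstep'
          _ = (n + 1 : ℕ) * s := by push_cast; ring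
  intro i j hi hij hjr hodd
  set k : ℕ := j - i with hkdef
  have hjik : j = i + k := by omega
  have hkr : (k : ℝ) ≤ R - 1 := by
    have : k ≤ r - 1 := by omega
    have : (k : ℝ) ≤ ((r - 1 : ℕ) : ℝ) := by exact_mod_cast this
    have hr1 : ((r - 1 : ℕ) : ℝ) = R - 1 := by
      rw [hRdef]; push_cast [Nat.cast_sub (by omega : 1 ≤ r)]; ring
    linarith [hr1 ▸ this]
  have hA : ‖p i + p j‖ ≤ (R - 1) * s := by
    have := (key k i hi (by omega)).1 hodd
    rw [hjik]
    calc ‖p i + p (i + k)‖ ≤ k * s := this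
      _ ≤ (R - 1) * s := mul_le_mul_of_nonneg_right hkr hs0
  have ha : ‖p i‖ = 1 := hsphere i hi (by omega)
  have hb : ‖p j‖ = 1 := hsphere j (by omega) hjr
  have h1 := norm_add_sq_real (p i) (p j)
  have h2 := norm_sub_sq_real (p i) (p j)
  have hsum : ‖p i + p j‖ ^ 2 + ‖p i - p j‖ ^ 2 = 4 := by
    rw [h1, h2, ha, hb]; ring
  have hA2 : ‖p i + p j‖ ^ 2 ≤ (R - 1) ^ 2 * (4 * δ) := by
    have := mul_self_le_mul_self (norm_nonneg (p i + p j)) hA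
    nlinarith [hssq]
  have hδval : δ * R ^ 2 = θ := by
    rw [hδdef]; field_simp
  have h8 : θ * R ^ 2 < 8 * R - 4 := by linarith
  have key2 : 4 * θ * (R - 1) ^ 2 / R ^ 2 < 4 * θ - θ ^ 2 := by
    rw [div_lt_iff₀ hR2]
    have h9 : (0:ℝ) < 8 * R - 4 - θ * R ^ 2 := by linarith
    nlinarith [mul_pos hθ0 h9]
  have e : 4 * δ * (R - 1) ^ 2 = 4 * θ * (R - 1) ^ 2 / R ^ 2 := by
    rw [hδdef]; ring
  have hmid : (2 - θ) ^ 2 < 4 - 4 * δ * (R - 1) ^ 2 := by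
    rw [e]; nlinarith [key2]
  have hnum : (2 - θ) ^ 2 < ‖p i - p j‖ ^ 2 := by nlinarith [hsum, hA2, hmid]
  exact lt_of_pow_lt_pow_left₀ 2 (norm_nonneg _) hnum
end

section
/- (Property (P2).) For every β > 0, every ε > 0, and every integer r ≥ 1, for all sufficiently large integers k the following holds: for every unit vector c ∈ ℝ^{k+1} and every real s₀ ∈ [0,1] with √(1 − s₀²) ≤ 1 − ε/(4r²√k), the spherical cap C = {x ∈ S^k : ⟨x, c⟩ ≥ s₀} satisfies μ(C) ≤ β. (Equivalently: every spherical cap of S^k whose diameter is at most 2 − ε/(2r²√k) has normalized measure at most β.) -/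
set_option maxHeartbeats 1000000

open MeasureTheory

/-- **Property (P2).** For every `β > 0`, `ε > 0`, and integer `r ≥ 1`, for
all sufficiently large `k`: every spherical cap
`C = {x ∈ S^k : ⟨x, c⟩ ≥ s₀}` with `c` a unit vector and `s₀ ∈ [0,1]`
satisfying `√(1 - s₀²) ≤ 1 - ε/(4r²√k)` (i.e. every cap of diameter at most
`2 - ε/(2r²√k)`) has normalized measure `μ(C) ≤ β`, where `μ` is the
rotation-invariant probability measure on the unit sphere `S^k ⊆ ℝ^{k+1}`
(formalized here as any probability measure on `ℝ^{k+1}` concentrated on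
`S^k` and invariant under all linear isometries). -/
theorem property_P2 (β ε : ℝ) (hβ : 0 < β) (hε : 0 < ε) (r : ℕ) (hr : 1 ≤ r) :
    ∃ k₀ : ℕ, ∀ k : ℕ, k₀ ≤ k →
      ∀ μ : MeasureTheory.Measure (EuclideanSpace ℝ (Fin (k + 1))),
        MeasureTheory.IsProbabilityMeasure μ →
        μ {x | ‖x‖ = 1} = 1 →
        (∀ R : EuclideanSpace ℝ (Fin (k + 1)) ≃ₗᵢ[ℝ] EuclideanSpace ℝ (Fin (k + 1)),
          MeasureTheory.Measure.map R μ = μ) →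
        ∀ c : EuclideanSpace ℝ (Fin (k + 1)), ‖c‖ = 1 →
          ∀ s₀ : ℝ, 0 ≤ s₀ → s₀ ≤ 1 →
            Real.sqrt (1 - s₀ ^ 2) ≤ 1 - ε / (4 * (r : ℝ) ^ 2 * Real.sqrt k) →
            (μ {x | ‖x‖ = 1 ∧ s₀ ≤ (inner ℝ x c : ℝ)}).toReal ≤ β := by
  set A : ℝ := max (4 * (r:ℝ)^2 / (β * ε)) 1 with hA
  obtain ⟨k₀, hk₀⟩ : ∃ k₀ : ℕ, A ^ 2 < k₀ := exists_nat_gt _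
  refine ⟨k₀, ?_⟩
  intro k hk μ hprob hsph hinv c hc s₀ hs0 hs1 hcap
  have hA1 : (1:ℝ) ≤ A := le_max_right _ _
  have hAk : A ^ 2 < (k:ℝ) := lt_of_lt_of_le hk₀ (by exact_mod_cast hk)
  have hskA : A ≤ Real.sqrt k := by
    rw [show (A:ℝ) = Real.sqrt (A^2) from (Real.sqrt_sq (by linarith)).symm]
    exact Real.sqrt_le_sqrt hAk.le
  have hsk1 : (1:ℝ) ≤ Real.sqrt k := le_trans hA1 hskA
  have hr' : (0:ℝ) < (r:ℝ)^2 := by positivity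
  set δ : ℝ := ε / (4 * (r:ℝ)^2 * Real.sqrt k) with hδ
  have hδpos : 0 < δ := by
    apply div_pos hε; positivity
  -- s₀ ^ 2 ≥ δ
  have hsq1 : 1 - s₀ ^ 2 ≤ 1 := by nlinarith
  have hsq0 : 0 ≤ 1 - s₀ ^ 2 := by nlinarith
  have h1 : 1 - s₀ ^ 2 ≤ Real.sqrt (1 - s₀ ^ 2) := by
    nlinarith [Real.sq_sqrt hsq0, Real.sqrt_le_one.mpr hsq1, Real.sqrt_nonneg (1 - s₀ ^ 2)]
  have hs₀δ : δ ≤ s₀ ^ 2 := by linarith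
  have hs₀pos : 0 < s₀ := by nlinarith
  -- caps
  set cap : EuclideanSpace ℝ (Fin (k + 1)) → Set (EuclideanSpace ℝ (Fin (k + 1))) :=
    fun u => {x | ‖x‖ = 1 ∧ s₀ ≤ (inner ℝ x u : ℝ)} with hcapdef
  have hmeas : ∀ u, MeasurableSet (cap u) := by
    intro u
    have h1 : IsClosed {x : EuclideanSpace ℝ (Fin (k+1)) | ‖x‖ = 1} :=
      isClosed_eq (continuous_norm) continuous_const
    have h2 : IsClosed {x : EuclideanSpace ℝ (Fin (k+1)) | s₀ ≤ (inner ℝ x u : ℝ)} :=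
      isClosed_le continuous_const (continuous_id.inner continuous_const)
    exact (h1.inter h2).measurableSet
  -- all caps with unit centers have equal measure
  have hcapeq : ∀ u : EuclideanSpace ℝ (Fin (k + 1)), ‖u‖ = 1 → μ (cap u) = μ (cap c) := by
    intro u hu
    set R := Submodule.reflection (ℝ ∙ (c - u))ᗮ with hR
    have hRc : R c = u := Submodule.reflection_sub (by rw [hc, hu])
    have hpre : R ⁻¹' (cap u) = cap c := by
      ext x
      simp only [hcapdef, Set.mem_preimage, Set.mem_setOf_eq, R.norm_map]
      constructor
      · rintro ⟨h1, h2⟩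
        refine ⟨h1, ?_⟩
        rwa [← hRc, R.inner_map_map] at h2
      · rintro ⟨h1, h2⟩
        refine ⟨h1, ?_⟩
        rwa [← hRc, R.inner_map_map]
    calc μ (cap u) = (Measure.map R μ) (cap u) := by rw [hinv R]
      _ = μ (R ⁻¹' (cap u)) := Measure.map_apply R.continuous.measurable (hmeas u)
      _ = μ (cap c) := by rw [hpre]
  -- sum over basis caps
  set e : Fin (k + 1) → EuclideanSpace ℝ (Fin (k + 1)) :=
    fun i => EuclideanSpace.single i (1:ℝ) with he
  have hce : ∀ i, μ (cap (e i)) = μ (cap c) := fun i =>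
    hcapeq (e i) (by simp [he])
  -- pointwise multiplicity bound
  have hpt : ∀ x : EuclideanSpace ℝ (Fin (k + 1)),
      (∑ i : Fin (k + 1), (cap (e i)).indicator (fun _ => (1:ENNReal)) x)
        ≤ ENNReal.ofReal (1 / s₀ ^ 2) := by
    intro x
    by_cases hx : ‖x‖ = 1
    · classical
      set T : Finset (Fin (k + 1)) := Finset.univ.filter (fun i => s₀ ≤ x i) with hT
      have hsum : (∑ i : Fin (k + 1), (cap (e i)).indicator (fun _ => (1:ENNReal)) x)
          = (T.card : ENNReal) := by
        rw [Finset.card_eq_sum_ones T]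
        push_cast
        rw [Finset.sum_filter]
        apply Finset.sum_congr rfl
        intro i _
        have hinner : (inner ℝ x (e i) : ℝ) = x i := by
          simp [he, EuclideanSpace.inner_single_right]
        by_cases h : s₀ ≤ x i
        · rw [if_pos h, Set.indicator_of_mem]
          exact ⟨hx, by rw [hinner]; exact h⟩
        · rw [if_neg h, Set.indicator_of_notMem]
          rintro ⟨-, h2⟩
          rw [hinner] at h2
          exact h h2
      rw [hsum]
      have hnormsq : (∑ i, x i ^ 2) = 1 := by
        have := EuclideanSpace.norm_eq x
        rw [hx] at this
        have h2 : Real.sqrt (∑ i, ‖x i‖ ^ 2) = 1 := this.symm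
        have h3 : (∑ i, ‖x i‖ ^ 2) = 1 := by
          nlinarith [Real.sq_sqrt (show (0:ℝ) ≤ ∑ i, ‖x i‖^2 by positivity), h2]
        simpa [Real.norm_eq_abs, sq_abs] using h3
      have hcard : (T.card : ℝ) * s₀ ^ 2 ≤ 1 := by
        have h4 : (T.card : ℝ) * s₀ ^ 2 ≤ ∑ i ∈ T, x i ^ 2 := by
          rw [Finset.card_eq_sum_ones T]
          push_cast
          rw [Finset.sum_mul, one_mul]
          apply Finset.sum_le_sum
          intro i hi
          have : s₀ ≤ x i := (Finset.mem_filter.mp hi).2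
          nlinarith
        have h5 : (∑ i ∈ T, x i ^ 2) ≤ ∑ i, x i ^ 2 :=
          Finset.sum_le_sum_of_subset_of_nonneg (Finset.subset_univ T)
            (fun i _ _ => sq_nonneg _)
        linarith [hnormsq]
      have hcard' : (T.card : ℝ) ≤ 1 / s₀ ^ 2 := by
        rw [le_div_iff₀ (by positivity)]
        exact hcard
      calc (T.card : ENNReal) = ENNReal.ofReal (T.card : ℝ) := by
            rw [ENNReal.ofReal_natCast]
        _ ≤ ENNReal.ofReal (1 / s₀ ^ 2) := ENNReal.ofReal_le_ofReal hcard'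
    · have : ∀ i : Fin (k + 1), (cap (e i)).indicator (fun _ => (1:ENNReal)) x = 0 := by
        intro i
        apply Set.indicator_of_notMem
        rintro ⟨h1, -⟩
        exact hx h1
      simp [this]
  -- sum of measures
  have hsummeas : (∑ i : Fin (k + 1), μ (cap (e i))) ≤ ENNReal.ofReal (1 / s₀ ^ 2) := by
    have h1 : (∑ i : Fin (k + 1), μ (cap (e i)))
        = ∫⁻ x, (∑ i : Fin (k + 1), (cap (e i)).indicator (fun _ => (1:ENNReal)) x) ∂μ := by
      rw [lintegral_finset_sum]
      · apply Finset.sum_congr rfl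
        intro i _
        exact (lintegral_indicator_one (hmeas (e i))).symm
      · intro i _
        exact (measurable_const.indicator (hmeas (e i)))
    rw [h1]
    calc ∫⁻ x, (∑ i : Fin (k + 1), (cap (e i)).indicator (fun _ => (1:ENNReal)) x) ∂μ
        ≤ ∫⁻ _, ENNReal.ofReal (1 / s₀ ^ 2) ∂μ := lintegral_mono hpt
      _ = ENNReal.ofReal (1 / s₀ ^ 2) := by
          rw [lintegral_const, measure_univ, mul_one]
  have hkmul : ((k:ENNReal) + 1) * μ (cap c) ≤ ENNReal.ofReal (1 / s₀ ^ 2) := by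
    have : (∑ i : Fin (k + 1), μ (cap (e i))) = ((k:ENNReal) + 1) * μ (cap c) := by
      rw [Finset.sum_congr rfl (fun i _ => hce i), Finset.sum_const, Finset.card_univ,
        Fintype.card_fin]
      push_cast
      ring
    rwa [← this]
  -- convert to real
  have hfin : μ (cap c) ≠ ⊤ := measure_ne_top μ _
  have hreal : ((k:ℝ) + 1) * (μ (cap c)).toReal ≤ 1 / s₀ ^ 2 := by
    have h2 : (((k:ENNReal) + 1) * μ (cap c)).toReal ≤ (ENNReal.ofReal (1 / s₀ ^ 2)).toReal :=
      ENNReal.toReal_mono (by simp) hkmul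
    rw [ENNReal.toReal_mul, ENNReal.toReal_ofReal (by positivity)] at h2
    have h3 : (((k:ENNReal) + 1)).toReal = (k:ℝ) + 1 := by
      rw [ENNReal.toReal_add (ENNReal.natCast_ne_top k) ENNReal.one_ne_top,
        ENNReal.toReal_one]
      simp
    rw [h3] at h2
    exact h2
  -- finish
  have hμnn : 0 ≤ (μ (cap c)).toReal := ENNReal.toReal_nonneg
  have hk1pos : (0:ℝ) < (k:ℝ) + 1 := by positivity
  have hbound : (μ (cap c)).toReal ≤ 1 / (((k:ℝ) + 1) * s₀ ^ 2) := by
    rw [le_div_iff₀ (by positivity)]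
    have hcc : (1 / s₀ ^ 2) * s₀ ^ 2 = 1 := by field_simp
    nlinarith [mul_le_mul_of_nonneg_right hreal (sq_nonneg s₀), hcc]
  have hchain : 1 / (((k:ℝ) + 1) * s₀ ^ 2) ≤ β := by
    have h3 : δ * ((k:ℝ) + 1) ≥ ε * Real.sqrt k / (4 * (r:ℝ)^2) := by
      rw [hδ, div_mul_eq_mul_div, ge_iff_le, div_le_div_iff₀ (by positivity) (by positivity)]
      have hsqk : Real.sqrt k * Real.sqrt k ≤ (k:ℝ) + 1 := by
        nlinarith [Real.sq_sqrt (show (0:ℝ) ≤ (k:ℝ) by positivity)]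
      nlinarith [mul_le_mul_of_nonneg_left hsqk
        (by positivity : (0:ℝ) ≤ ε * (4 * (r:ℝ)^2))]
    have h4 : 4 * (r:ℝ)^2 / (β * ε) ≤ Real.sqrt k := le_trans (le_max_left _ _) hskA
    have h5 : 4 * (r:ℝ)^2 ≤ β * ε * Real.sqrt k := by
      rw [div_le_iff₀ (by positivity)] at h4
      linarith
    have h6 : 1 / β ≤ ε * Real.sqrt k / (4 * (r:ℝ)^2) := by
      rw [div_le_div_iff₀ hβ (by positivity)]
      nlinarith
    have h7 : 1 / β ≤ δ * ((k:ℝ) + 1) := le_trans h6 h3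
    have h8 : 1 / β ≤ ((k:ℝ) + 1) * s₀ ^ 2 := by
      nlinarith [mul_le_mul_of_nonneg_right hs₀δ (le_of_lt hk1pos)]
    rw [div_le_iff₀ (by positivity)]
    rw [div_le_iff₀ hβ] at h8
    nlinarith
  calc (μ (cap c)).toReal ≤ 1 / (((k:ℝ) + 1) * s₀ ^ 2) := hbound
    _ ≤ β := hchain
end
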